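/- Let P, P_Y, P_Z, P_E > 0 with P_Y < P_Z. Define D_min = 1/(1+P/P_Y), D₁ = (1+P/P_Z)/(1+P/P_Y), f(D) = 1/((1/D)·(1+P/P_Z)/(1+P/P_Y) + 1/P_E) for D ∈ [D_min, D₁]. Then for every D strictly between D_min and D₁, f(D) > f(D_min) + (D − D_min)/(D₁ − D_min) · (f(D₁) − f(D_min)); i.e., the optimal tradeoff curve lies strictly above the time-sharing line between its endpoints. -/

import Mathlib

lemma key_strict_concave (c e a x b : ℝ) (hc : 0 < c) (he : 0 < e)
    (ha : 0 < a) (hax : a < x) (hxb : x < b) :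
    1 / (c / a + e) + (x - a) / (b - a) * (1 / (c / b + e) - 1 / (c / a + e))
      < 1 / (c / x + e) := by
  have hx : 0 < x := ha.trans hax
  have hb : 0 < b := hx.trans hxb
  have hba : 0 < b - a := by linarith
  have hda : 0 < c / a + e := by positivity
  have hdx : 0 < c / x + e := by positivity
  have hdb : 0 < c / b + e := by positivity
  rw [div_add' _ _ _ ha.ne', div_add' _ _ _ hx.ne', div_add' _ _ _ hb.ne',
    one_div_div, one_div_div, one_div_div]
  have hda' : 0 < c + e * a := by nlinarith
  have hdx' : 0 < c + e * x := by nlinarith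
  have hdb' : 0 < c + e * b := by nlinarith
  have hkey : x / (c + e * x) -
      (a / (c + e * a) + (x - a) / (b - a) * (b / (c + e * b) - a / (c + e * a)))
      = c * e * (x - a) * (b - x) / ((c + e * a) * (c + e * x) * (c + e * b)) := by
    field_simp
    ring
  have hpos : 0 < c * e * (x - a) * (b - x) / ((c + e * a) * (c + e * x) * (c + e * b)) := by
    have h1 : 0 < x - a := by linarith
    have h2 : 0 < b - x := by linarith
    positivity
  linarith [hkey, hpos]

theorem stmt_18 (P PY PZ PE : ℝ) (hP : 0 < P) (hPY : 0 < PY) (hPZ : 0 < PZ)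
    (hPE : 0 < PE) (hYZ : PY < PZ)
    (Dmin D₁ : ℝ)
    (hDmin : Dmin = 1 / (1 + P / PY))
    (hD₁ : D₁ = (1 + P / PZ) / (1 + P / PY))
    (f : ℝ → ℝ)
    (hf : ∀ D, f D = 1 / ((1 / D) * (1 + P / PZ) / (1 + P / PY) + 1 / PE)) :
    ∀ D : ℝ, Dmin < D → D < D₁ →
      f Dmin + (D - Dmin) / (D₁ - Dmin) * (f D₁ - f Dmin) < f D := by
  intro D h1 h2
  set c : ℝ := (1 + P / PZ) / (1 + P / PY) with hc
  have hcpos : 0 < c := by positivity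
  have hDminpos : 0 < Dmin := by rw [hDmin]; positivity
  have hf' : ∀ x : ℝ, f x = 1 / (c / x + 1 / PE) := by
    intro x; rw [hf x, hc]; ring_nf
  rw [hf' Dmin, hf' D₁, hf' D]
  exact key_strict_concave c (1 / PE) Dmin D D₁ hcpos (by positivity) hDminpos h1 h2
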